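/- Let W be a function analytic and nonvanishing on the upper half-plane Im z > 0. Assume that for every positive integer r, all points w₁,…,w_r with Im w_α > 0, and all complex numbers c₁,…,c_r, the sum ∑_{α,β=1}^r c_α·conj(c_β)·[K_W(w_α, w_β + i) + K_W(w_α + i, w_β)] is a nonnegative real number. Then Re{W(z)/W(z+i)} ≥ 0 for every z with Im z > 0. -/

import Mathlib

open Complex ComplexConjugate
open scoped ComplexOrder

/-- The reproducing kernel `K_W(w,z) = W(z) conj(W(w)) / (2πi (conj w − z))`. -/
noncomputable def KW (W : ℂ → ℂ) (w z : ℂ) : ℂ :=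
  W z * conj (W w) / (2 * Real.pi * I * (conj w - z))

theorem stmt_6 (W : ℂ → ℂ)
    (hW : DifferentiableOn ℂ W {z : ℂ | 0 < z.im})
    (hW0 : ∀ z : ℂ, 0 < z.im → W z ≠ 0)
    (hpos : ∀ r : ℕ, 0 < r → ∀ w : Fin r → ℂ, (∀ α, 0 < (w α).im) → ∀ c : Fin r → ℂ,
      0 ≤ ∑ α, ∑ β, c α * conj (c β) *
        (KW W (w α) (w β + I) + KW W (w α + I) (w β))) :
    ∀ z : ℂ, 0 < z.im → 0 ≤ (W z / W (z + I)).re := by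
  intro z hz
  have hz1 : 0 < (z + I).im := by simp; linarith
  have hWa : W (z + I) ≠ 0 := hW0 _ hz1
  have h := hpos 1 one_pos (fun _ => z) (fun _ => hz) (fun _ => 1)
  simp only [Fin.sum_univ_one, map_one, one_mul, mul_one] at h
  have hre : (0:ℝ) ≤ (KW W z (z + I) + KW W (z + I) z).re := by
    have := (Complex.le_def.mp h).1
    simpa using this
  set a := W z with ha
  set b := W (z + I) with hb
  have hdpos : (0:ℝ) < 2 * Real.pi * (2 * z.im + 1) := by
    have := Real.pi_pos; positivity
  have hden1 : (2 * (Real.pi:ℂ) * I * (conj z - (z + I))) =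
      ((2 * Real.pi * (2 * z.im + 1) : ℝ) : ℂ) := by
    apply Complex.ext <;> simp <;> ring
  have hden2 : (2 * (Real.pi:ℂ) * I * (conj (z + I) - z)) =
      ((2 * Real.pi * (2 * z.im + 1) : ℝ) : ℂ) := by
    apply Complex.ext <;> simp <;> ring
  have hkey : (KW W z (z + I) + KW W (z + I) z).re =
      2 * (a.re * b.re + a.im * b.im) / (2 * Real.pi * (2 * z.im + 1)) := by
    rw [KW, KW, ← hb, ← ha, hden1, hden2, ← add_div, Complex.div_ofReal_re]
    congr 1
    simp [Complex.add_re, Complex.mul_re]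
    ring
  rw [hkey] at hre
  have hnum : (0:ℝ) ≤ a.re * b.re + a.im * b.im := by
    have h2 := mul_nonneg hre hdpos.le
    rw [div_mul_cancel₀ _ hdpos.ne'] at h2
    linarith
  rw [Complex.div_re]
  have hns : (0:ℝ) < Complex.normSq b := Complex.normSq_pos.mpr hWa
  have : a.re * b.re / Complex.normSq b + a.im * b.im / Complex.normSq b =
      (a.re * b.re + a.im * b.im) / Complex.normSq b := by ring
  rw [this]
  positivity
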